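/- The von Mises-Fisher mechanism V(ε,μ), with density proportional to exp(ε μᵀx) over the unit sphere S^{K-1}, satisfies εd_L-privacy with respect to the angular distance: for all unit vectors μ, μ' and measurable Z ⊆ S^{K-1}, Pr[V(ε,μ) ∈ Z] ≤ e^{ε d_L(μ,μ')} · Pr[V(ε,μ') ∈ Z], where d_L(μ,μ') = arccos(μᵀμ'). -/

import Mathlib

open MeasureTheory

lemma norm_sub_le_arccos {K : ℕ} (μ μ' : EuclideanSpace ℝ (Fin K))
    (hμ : ‖μ‖ = 1) (hμ' : ‖μ'‖ = 1) :
    ‖μ - μ'‖ ≤ Real.arccos (inner ℝ μ μ' : ℝ) := by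
  have habs : |(inner ℝ μ μ' : ℝ)| ≤ 1 := by
    have := abs_real_inner_le_norm μ μ'
    rwa [hμ, hμ', mul_one] at this
  set θ := Real.arccos (inner ℝ μ μ' : ℝ) with hθ
  have hθ0 : 0 ≤ θ := Real.arccos_nonneg _
  have hcos : Real.cos θ = (inner ℝ μ μ' : ℝ) :=
    Real.cos_arccos (neg_le_of_abs_le habs) (le_of_abs_le habs)
  have hsq : ‖μ - μ'‖ ^ 2 ≤ θ ^ 2 := by
    have h1 : ‖μ - μ'‖ ^ 2 = 2 - 2 * (inner ℝ μ μ' : ℝ) := by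
      rw [norm_sub_sq_real, hμ, hμ']; ring
    have h2 := Real.one_sub_sq_div_two_le_cos (x := θ)
    rw [hcos] at h2
    nlinarith
  calc ‖μ - μ'‖ = √(‖μ - μ'‖ ^ 2) := by rw [Real.sqrt_sq (norm_nonneg _)]
    _ ≤ √(θ ^ 2) := Real.sqrt_le_sqrt hsq
    _ = θ := Real.sqrt_sq hθ0

/-- The von Mises-Fisher mechanism, with density proportional to
`exp (ε ⟪μ, x⟫)` with respect to a measure `σ` concentrated on the unit sphere,
satisfies εd_L-privacy for the angular distance `d_L(μ,μ') = arccos ⟪μ,μ'⟫`. -/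
theorem vmf_satisfies_directional_privacy {K : ℕ}
    (ε : ℝ) (hε : 0 < ε)
    (σ : Measure (EuclideanSpace ℝ (Fin K)))
    (hσ : σ {x | ‖x‖ ≠ 1} = 0)
    (C : ℝ) (hC : 0 < C)
    (μ μ' : EuclideanSpace ℝ (Fin K)) (hμ : ‖μ‖ = 1) (hμ' : ‖μ'‖ = 1)
    (Z : Set (EuclideanSpace ℝ (Fin K))) (hZ : MeasurableSet Z) :
    σ.withDensity (fun x => ENNReal.ofReal (C * Real.exp (ε * (inner ℝ μ x : ℝ)))) Z ≤
      ENNReal.ofReal (Real.exp (ε * Real.arccos (inner ℝ μ μ' : ℝ))) *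
        σ.withDensity (fun x => ENNReal.ofReal (C * Real.exp (ε * (inner ℝ μ' x : ℝ)))) Z := by
  rw [withDensity_apply _ hZ, withDensity_apply _ hZ,
    ← lintegral_const_mul' _ _ ENNReal.ofReal_ne_top]
  apply lintegral_mono_ae
  have hres : σ.restrict Z {x | ‖x‖ ≠ 1} = 0 :=
    le_antisymm (le_trans (Measure.restrict_le_self _) hσ.le) zero_le
  have hae : ∀ᵐ x ∂σ.restrict Z, ‖x‖ = 1 := by
    rw [MeasureTheory.ae_iff]
    exact hres
  filter_upwards [hae] with x hx
  rw [← ENNReal.ofReal_mul (Real.exp_nonneg _)]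
  apply ENNReal.ofReal_le_ofReal
  rw [show Real.exp (ε * Real.arccos (inner ℝ μ μ' : ℝ)) * (C * Real.exp (ε * (inner ℝ μ' x : ℝ)))
      = C * Real.exp (ε * Real.arccos (inner ℝ μ μ' : ℝ) + ε * (inner ℝ μ' x : ℝ)) by
    rw [Real.exp_add]; ring]
  apply mul_le_mul_of_nonneg_left _ hC.le
  apply Real.exp_le_exp.2
  have key : (inner ℝ μ x : ℝ) - (inner ℝ μ' x : ℝ) ≤ Real.arccos (inner ℝ μ μ' : ℝ) := by
    have h1 : (inner ℝ μ x : ℝ) - (inner ℝ μ' x : ℝ) = (inner ℝ (μ - μ') x : ℝ) := by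
      rw [inner_sub_left]
    rw [h1]
    calc (inner ℝ (μ - μ') x : ℝ) ≤ ‖μ - μ'‖ * ‖x‖ := real_inner_le_norm _ _
      _ = ‖μ - μ'‖ := by rw [hx, mul_one]
      _ ≤ Real.arccos (inner ℝ μ μ' : ℝ) := norm_sub_le_arccos μ μ' hμ hμ'
  nlinarith
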